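/- Let f(x, y, z) be a quadratic form in three variables with rational coefficients. If f has a nontrivial zero in the field ℚ_p of p-adic numbers for every prime number p, then f has a nontrivial zero in ℚ. -/

import Mathlib

/-- Isotropy of the ternary form `x² - a y² - b z²` over a field. -/
def HMIsot (K : Type*) [Field K] (a b : K) : Prop :=
  ∃ x y z : K, ¬ (x = 0 ∧ y = 0 ∧ z = 0) ∧ x ^ 2 - a * y ^ 2 - b * z ^ 2 = 0

variable {K : Type*} [Field K]

theorem hmIsot_swap {a b : K} (h : HMIsot K a b) : HMIsot K b a := by
  obtain ⟨x, y, z, hnz, he⟩ := h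
  exact ⟨x, z, y, fun ⟨h1, h2, h3⟩ => hnz ⟨h1, h3, h2⟩, by linear_combination he⟩

theorem hmIsot_scale {a b : K} (s : K) (hs : s ≠ 0) (h : HMIsot K a (b * s ^ 2)) :
    HMIsot K a b := by
  obtain ⟨x, y, z, hnz, he⟩ := h
  refine ⟨x, y, s * z, fun ⟨h1, h2, h3⟩ => hnz ⟨h1, h2, ?_⟩, by linear_combination he⟩
  rcases mul_eq_zero.1 h3 with h | h
  · exact absurd h hs
  · exact h

theorem hmIsot_sq {a b : K} {t : K} (ha : t ^ 2 = a) : HMIsot K a b :=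
  ⟨t, 1, 0, fun ⟨_, h2, _⟩ => one_ne_zero h2, by linear_combination ha⟩

theorem hmIsot_of_norm {a b c t : K} (hb : b ≠ 0) (h : t ^ 2 - a = b * c)
    (hi : HMIsot K a b) : HMIsot K a c := by
  obtain ⟨x, y, z, hnz, he⟩ := hi
  by_cases hz : z = 0
  · subst hz
    have hy : y ≠ 0 := by
      rintro rfl
      have hx : x = 0 := by
        have : x ^ 2 = 0 := by linear_combination he
        exact pow_eq_zero_iff (n := 2) (by norm_num) |>.1 this
      exact hnz ⟨hx, rfl, rfl⟩
    exact hmIsot_sq (t := x / y) (by field_simp; linear_combination he)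
  · obtain ⟨X, Y, hX2⟩ : ∃ X Y : K, X ^ 2 - a * Y ^ 2 = b :=
      ⟨x / z, y / z, by
        rw [div_pow, div_pow, ← mul_div_assoc, ← sub_div, eq_comm,
          eq_div_iff (pow_ne_zero 2 hz)]
        linear_combination -he⟩
    refine ⟨(t * X - a * Y) / b, (X - t * Y) / b, 1,
      fun ⟨_, _, h3⟩ => one_ne_zero h3, ?_⟩
    field_simp
    linear_combination (t ^ 2 - a) * hX2 + b * h

theorem hmIsot_scale' {a b : K} (s : K) (hs : s ≠ 0) (h : HMIsot K a b) :
    HMIsot K a (b * s ^ 2) := by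
  obtain ⟨x, y, z, hnz, he⟩ := h
  refine ⟨x, y, z / s, fun ⟨h1, h2, h3⟩ => hnz ⟨h1, h2, ?_⟩, ?_⟩
  · rw [div_eq_zero_iff] at h3
    rcases h3 with h | h
    · exact h
    · exact absurd h hs
  · rw [div_pow]
    field_simp
    linear_combination he

variable {p : ℕ} [Fact p.Prime]

theorem hm_primitive {a b : ℤ} (x y z : ℚ_[p]) (hnz : ¬ (x = 0 ∧ y = 0 ∧ z = 0))
    (he : x ^ 2 - (a : ℚ_[p]) * y ^ 2 - (b : ℚ_[p]) * z ^ 2 = 0) :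
    ∃ X Y Z : ℤ_[p], (IsUnit X ∨ IsUnit Y ∨ IsUnit Z) ∧
      X ^ 2 - (a : ℤ_[p]) * Y ^ 2 - (b : ℤ_[p]) * Z ^ 2 = 0 := by
  obtain ⟨w, hwx, hwy, hwz, hwmem⟩ :
      ∃ w : ℚ_[p], ‖x‖ ≤ ‖w‖ ∧ ‖y‖ ≤ ‖w‖ ∧ ‖z‖ ≤ ‖w‖ ∧ (w = x ∨ w = y ∨ w = z) := by
    rcases le_total ‖x‖ ‖y‖ with h1 | h1 <;> rcases le_total ‖y‖ ‖z‖ with h2 | h2 <;>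
      rcases le_total ‖x‖ ‖z‖ with h3 | h3
    all_goals first
      | exact ⟨x, le_rfl, by linarith, by linarith, Or.inl rfl⟩
      | exact ⟨y, by linarith, le_rfl, by linarith, Or.inr (Or.inl rfl)⟩
      | exact ⟨z, by linarith, by linarith, le_rfl, Or.inr (Or.inr rfl)⟩
  have hw0 : w ≠ 0 := by
    rintro rfl
    simp only [norm_zero] at hwx hwy hwz
    exact hnz ⟨norm_le_zero_iff.1 hwx, norm_le_zero_iff.1 hwy, norm_le_zero_iff.1 hwz⟩
  have hd : ∀ u : ℚ_[p], ‖u‖ ≤ ‖w‖ → ‖u / w‖ ≤ 1 := fun u hu => by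
    rw [norm_div]; exact div_le_one_of_le₀ hu (norm_nonneg _)
  refine ⟨⟨x / w, hd x hwx⟩, ⟨y / w, hd y hwy⟩, ⟨z / w, hd z hwz⟩, ?_, ?_⟩
  · rcases hwmem with h | h | h
    · exact Or.inl (PadicInt.isUnit_iff.2 (by simp [← h, norm_div, div_self (norm_ne_zero_iff.2 hw0)]))
    · exact Or.inr (Or.inl (PadicInt.isUnit_iff.2
        (by simp [← h, norm_div, div_self (norm_ne_zero_iff.2 hw0)])))
    · exact Or.inr (Or.inr (PadicInt.isUnit_iff.2
        (by simp [← h, norm_div, div_self (norm_ne_zero_iff.2 hw0)])))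
  · have : ((⟨x / w, hd x hwx⟩ ^ 2 - (a : ℤ_[p]) * ⟨y / w, hd y hwy⟩ ^ 2
        - (b : ℤ_[p]) * ⟨z / w, hd z hwz⟩ ^ 2 : ℤ_[p]) : ℚ_[p]) = ((0 : ℤ_[p]) : ℚ_[p]) := by
      push_cast
      show (x / w) ^ 2 - (a : ℚ_[p]) * (y / w) ^ 2 - (b : ℚ_[p]) * (z / w) ^ 2 = 0
      rw [div_pow, div_pow, div_pow, ← mul_div_assoc, ← mul_div_assoc, ← sub_div, ← sub_div,
        he, zero_div]
    exact Subtype.coe_injective this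

variable {p : ℕ} [hpf : Fact p.Prime]

theorem hm_toZMod_zero_iff (X : ℤ_[p]) :
    PadicInt.toZMod X = 0 ↔ (p : ℤ_[p]) ∣ X := by
  rw [← RingHom.mem_ker, PadicInt.ker_toZMod, PadicInt.maximalIdeal_eq_span_p,
    Ideal.mem_span_singleton]

theorem hm_unit_toZMod_ne {X : ℤ_[p]} (h : IsUnit X) : PadicInt.toZMod X ≠ 0 := by
  intro h0
  exact (h.map PadicInt.toZMod).ne_zero h0

/-- If `p ∣ b`, `b` squarefree, `p ∤ a` and the form `x² - a y² - b z²` is isotropic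
over `ℚ_p`, then `a` is a square mod `p`. -/
theorem hm_sq_mod {a b : ℤ} (hb : Squarefree b)
    (hpb : (p : ℤ) ∣ b) (hi : HMIsot ℚ_[p] (a : ℚ_[p]) (b : ℚ_[p])) :
    ∃ t : ℤ, (p : ℤ) ∣ t ^ 2 - a := by
  obtain ⟨x, y, z, hnz, he⟩ := hi
  obtain ⟨X, Y, Z, hu, heq⟩ := hm_primitive x y z hnz he
  set φ := (PadicInt.toZMod : ℤ_[p] →+* ZMod p) with hφ
  have hmap : φ X ^ 2 - (a : ZMod p) * φ Y ^ 2 - (b : ZMod p) * φ Z ^ 2 = 0 := by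
    have := congrArg φ heq
    simpa only [map_sub, map_mul, map_pow, map_intCast, map_zero] using this
  have hb0 : (b : ZMod p) = 0 := (ZMod.intCast_zmod_eq_zero_iff_dvd b p).2
    (by exact_mod_cast hpb)
  rw [hb0, zero_mul, sub_zero, sub_eq_zero] at hmap
  by_cases hY : φ Y = 0
  · -- contradiction: all three would be non-units
    exfalso
    rw [hY] at hmap
    have hX : φ X = 0 := by
      have : φ X ^ 2 = 0 := by rw [hmap]; ring
      exact pow_eq_zero_iff (n := 2) (by norm_num) |>.1 this
    -- X = p X', Y = p Y'
    obtain ⟨X', hX'⟩ := (hm_toZMod_zero_iff X).1 hX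
    obtain ⟨Y', hY'⟩ := (hm_toZMod_zero_iff Y).1 hY
    -- b = p * b₁ with p ∤ b₁
    obtain ⟨b₁, hb₁⟩ := hpb
    have hpb₁ : ¬ (p : ℤ) ∣ b₁ := by
      intro hdvd
      have hsq : (p : ℤ) * (p : ℤ) ∣ b := by
        rw [hb₁]; exact mul_dvd_mul_left _ hdvd
      exact (Nat.prime_iff_prime_int.mp hpf.out).not_unit (hb _ hsq)
    have hb₁' : (b : ℤ_[p]) = (p : ℤ_[p]) * (b₁ : ℤ_[p]) := by
      rw [hb₁]; push_cast; ring
    have hpne : (p : ℤ_[p]) ≠ 0 := Nat.cast_ne_zero.2 hpf.out.ne_zero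
    have hcancel : (b₁ : ℤ_[p]) * Z ^ 2 = (p : ℤ_[p]) * (X' ^ 2 - (a : ℤ_[p]) * Y' ^ 2) := by
      apply mul_left_cancel₀ hpne
      rw [hX', hY', hb₁'] at heq
      linear_combination -heq
    have hZ : φ Z = 0 := by
      have hmap2 : (b₁ : ZMod p) * φ Z ^ 2 = 0 := by
        have := congrArg φ hcancel
        simpa only [map_mul, map_sub, map_pow, map_intCast, map_natCast,
          ZMod.natCast_self, zero_mul] using this
      have hb₁0 : (b₁ : ZMod p) ≠ 0 := fun h0 =>
        hpb₁ (by exact_mod_cast (ZMod.intCast_zmod_eq_zero_iff_dvd b₁ p).1 h0)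
      have : φ Z ^ 2 = 0 := by
        rcases mul_eq_zero.1 hmap2 with h | h
        · exact absurd h hb₁0
        · exact h
      exact pow_eq_zero_iff (n := 2) (by norm_num) |>.1 this
    rcases hu with h | h | h
    · exact hm_unit_toZMod_ne h hX
    · exact hm_unit_toZMod_ne h hY
    · exact hm_unit_toZMod_ne h hZ
  · obtain ⟨t, ht⟩ := ZMod.intCast_surjective (φ X * (φ Y)⁻¹)
    refine ⟨t, (ZMod.intCast_zmod_eq_zero_iff_dvd _ p).1 ?_⟩
    push_cast
    rw [ht]
    field_simp
    rw [hmap]; ring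

theorem hm_two : ¬ HMIsot ℚ_[2] (((-1 : ℤ) : ℚ_[2])) (((-1 : ℤ) : ℚ_[2])) := by
  rintro ⟨x, y, z, hnz, he⟩
  obtain ⟨X, Y, Z, hu, heq⟩ := hm_primitive (p := 2) (a := -1) (b := -1) x y z hnz he
  set φ := (PadicInt.toZModPow (p := 2) 2 : ℤ_[2] →+* ZMod (2 ^ 2)) with hφ
  have heq' : X ^ 2 + Y ^ 2 + Z ^ 2 = 0 := by
    rw [show ((-1 : ℤ) : ℤ_[2]) = -1 by push_cast; ring] at heq
    linear_combination heq
  have hsum : φ X ^ 2 + φ Y ^ 2 + φ Z ^ 2 = 0 := by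
    simpa only [map_add, map_pow, map_zero] using congrArg φ heq'
  have hsq : ∀ u v : ZMod (2 ^ 2), u * v = 1 → u ^ 2 = 1 := by decide
  have htwo : ∀ v : ZMod (2 ^ 2), (2 * v) ^ 2 = 0 := by decide
  have key : ∀ W : ℤ_[2], (φ W ^ 2 = 0 ∨ φ W ^ 2 = 1) ∧ (IsUnit W → φ W ^ 2 = 1) := by
    intro W
    by_cases hW : IsUnit W
    · obtain ⟨v, hv⟩ := isUnit_iff_exists_inv.1 (hW.map φ)
      exact ⟨Or.inr (hsq _ v hv), fun _ => hsq _ v hv⟩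
    · have h2 : ((2 : ℕ) : ℤ_[2]) ∣ W := by
        rw [← PadicInt.norm_lt_one_iff_dvd]
        rcases lt_or_eq_of_le W.2 with h | h
        · exact h
        · exact absurd (PadicInt.isUnit_iff.2 h) hW
      obtain ⟨V, hV⟩ := h2
      have h0 : φ W ^ 2 = 0 := by
        have hφ2 : φ (((2 : ℕ) : ℤ_[2])) = (2 : ZMod (2 ^ 2)) := by
          rw [map_natCast]; norm_cast
        rw [hV, map_mul, hφ2]
        exact htwo _
      exact ⟨Or.inl h0, fun h => absurd h hW⟩
  obtain ⟨hX, hX'⟩ := key X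
  obtain ⟨hY, hY'⟩ := key Y
  obtain ⟨hZ, hZ'⟩ := key Z
  have hone : φ X ^ 2 = 1 ∨ φ Y ^ 2 = 1 ∨ φ Z ^ 2 = 1 := by
    rcases hu with h | h | h
    · exact Or.inl (hX' h)
    · exact Or.inr (Or.inl (hY' h))
    · exact Or.inr (Or.inr (hZ' h))
  rcases hX with h1 | h1 <;> rcases hY with h2 | h2 <;> rcases hZ with h3 | h3 <;>
    rw [h1, h2, h3] at hsum hone <;> revert hone <;> revert hsum <;> decide

theorem hm_sqfree_decomp_int (n : ℤ) (hn : n ≠ 0) :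
    ∃ m k : ℤ, Squarefree m ∧ k ≠ 0 ∧ n = m * k ^ 2 := by
  obtain ⟨A, B, hBA, hA⟩ := Nat.sq_mul_squarefree n.natAbs
  have hB : (B : ℤ) ≠ 0 := by
    intro h
    apply hn
    have : B = 0 := by exact_mod_cast h
    rw [this] at hBA
    simp at hBA
    omega
  rcases Int.natAbs_eq n with h | h
  · exact ⟨(A : ℤ), (B : ℤ), Int.squarefree_natCast.2 hA, hB,
      by rw [h, ← hBA]; push_cast; ring⟩
  · refine ⟨-(A : ℤ), (B : ℤ), ?_, hB, by rw [h, ← hBA]; push_cast; ring⟩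
    intro x hx
    exact (Int.squarefree_natCast.2 hA) x (dvd_neg.1 hx)

theorem hm_sqfree_decomp_rat (q : ℚ) (hq : q ≠ 0) :
    ∃ (m : ℤ) (s : ℚ), Squarefree m ∧ s ≠ 0 ∧ q = (m : ℚ) * s ^ 2 := by
  have hnum : q.num ≠ 0 := Rat.num_ne_zero.2 hq
  have hden : (q.den : ℤ) ≠ 0 := by exact_mod_cast q.den_nz
  obtain ⟨m, k, hm, hk, hmk⟩ := hm_sqfree_decomp_int (q.num * q.den) (mul_ne_zero hnum hden)
  refine ⟨m, (k : ℚ) / (q.den : ℚ), hm, ?_, ?_⟩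
  · exact div_ne_zero (by exact_mod_cast hk) (by exact_mod_cast hden)
  · have hden' : ((q.den : ℚ)) ≠ 0 := by exact_mod_cast hden
    have h1 : (q.num : ℚ) = q * (q.den : ℚ) := (div_eq_iff hden').1 (Rat.num_div_den q)
    have hden2 : ((q.den : ℚ)) ^ 2 ≠ 0 := pow_ne_zero 2 hden'
    rw [div_pow, ← mul_div_assoc, eq_div_iff hden2]
    have hc := congrArg (fun x : ℤ => (x : ℚ)) hmk
    push_cast at hc
    linear_combination hc - (q.den : ℚ) * h1

theorem hm_crt (a : ℤ) : ∀ n : ℕ, Squarefree n →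
    (∀ p : ℕ, p.Prime → p ∣ n → ∃ t : ℤ, (p : ℤ) ∣ t ^ 2 - a) →
    ∃ t : ℤ, (n : ℤ) ∣ t ^ 2 - a := by
  intro n
  induction n using Nat.strong_induction_on with
  | _ n IH =>
    intro hsf hper
    rcases eq_or_ne n 1 with rfl | hn1
    · exact ⟨0, by simp⟩
    have hn0 : n ≠ 0 := by rintro rfl; exact not_squarefree_zero hsf
    set p := n.minFac with hp
    have hpp : p.Prime := Nat.minFac_prime hn1
    obtain ⟨m, hm⟩ := n.minFac_dvd
    have hm0 : m ≠ 0 := by rintro rfl; simp at hm; exact hn0 hm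
    have hmn : m < n := by
      rw [hm]
      have h2 := hpp.two_le
      nlinarith [Nat.pos_of_ne_zero hm0]
    have hsm : Squarefree m := hsf.squarefree_of_dvd ⟨p, by rw [hm]; ring⟩
    have hpm : ¬ p ∣ m := by
      intro hd
      exact hpp.not_isUnit (hsf p (by rw [hm]; exact mul_dvd_mul_left p hd))
    obtain ⟨t₁, ht₁⟩ := IH m hmn hsm (fun q hq hqm => hper q hq (hm ▸ Dvd.dvd.mul_left hqm p))
    obtain ⟨t₂, ht₂⟩ := hper p hpp n.minFac_dvd
    have hcop : IsCoprime (p : ℤ) (m : ℤ) :=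
      Nat.isCoprime_iff_coprime.2 (hpp.coprime_iff_not_dvd.2 hpm)
    obtain ⟨u, v, huv⟩ := id hcop
    refine ⟨t₂ * v * m + t₁ * u * p, ?_⟩
    set t : ℤ := t₂ * v * m + t₁ * u * p with ht
    have hpd : (p : ℤ) ∣ t - t₂ := ⟨(t₁ - t₂) * u, by rw [ht]; linear_combination t₂ * huv⟩
    have hmd : (m : ℤ) ∣ t - t₁ := ⟨(t₂ - t₁) * v, by rw [ht]; linear_combination t₁ * huv⟩
    have h1 : (p : ℤ) ∣ t ^ 2 - a := by
      have hrw : t ^ 2 - a = (t - t₂) * (t + t₂) + (t₂ ^ 2 - a) := by ring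
      rw [hrw]
      exact dvd_add (hpd.mul_right _) ht₂
    have h2 : (m : ℤ) ∣ t ^ 2 - a := by
      have hrw : t ^ 2 - a = (t - t₁) * (t + t₁) + (t₁ ^ 2 - a) := by ring
      rw [hrw]
      exact dvd_add (hmd.mul_right _) ht₁
    have : ((n : ℕ) : ℤ) = (p : ℤ) * (m : ℤ) := by exact_mod_cast congrArg (Nat.cast : ℕ → ℤ) hm
    rw [this]
    exact hcop.mul_dvd h1 h2

theorem hm_balanced (a b t : ℤ) (hb2 : 2 ≤ |b|) (hbt : b ∣ t ^ 2 - a) :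
    ∃ t' : ℤ, 2 * |t'| ≤ |b| ∧ b ∣ t' ^ 2 - a := by
  have hB0 : (0 : ℤ) < |b| := by linarith
  set B := |b| with hB
  have hBd : B ∣ t ^ 2 - a := (abs_dvd b _).2 hbt
  set r := t % B with hr
  have hr0 : 0 ≤ r := Int.emod_nonneg t (by positivity)
  have hrB : r < B := Int.emod_lt_of_pos t hB0
  have htr : B ∣ t - r := ⟨t / B, by rw [hr, Int.emod_def]; ring⟩
  have key : ∀ t' : ℤ, B ∣ t - t' → b ∣ t' ^ 2 - a := by
    intro t' hd
    have h1 : B ∣ t ^ 2 - t' ^ 2 := by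
      have : t ^ 2 - t' ^ 2 = (t - t') * (t + t') := by ring
      rw [this]; exact hd.mul_right _
    have h2 : B ∣ t' ^ 2 - a := by
      have : t' ^ 2 - a = (t ^ 2 - a) - (t ^ 2 - t' ^ 2) := by ring
      rw [this]; exact dvd_sub hBd h1
    exact (abs_dvd b _).1 (hB ▸ h2)
  rcases le_or_gt (2 * r) B with h | h
  · exact ⟨r, by rw [abs_of_nonneg hr0]; linarith, key r htr⟩
  · refine ⟨r - B, ?_, key (r - B) ?_⟩
    · rw [abs_of_nonpos (by linarith)]; linarith
    · obtain ⟨w, hw⟩ := htr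
      exact ⟨w + 1, by rw [mul_add]; omega⟩

theorem hm_core (n : ℕ) : ∀ a b : ℤ, a.natAbs + b.natAbs ≤ n → a ≠ 0 → b ≠ 0 →
    Squarefree a → Squarefree b →
    (∀ (p : ℕ) [Fact p.Prime], HMIsot ℚ_[p] ((a : ℤ) : ℚ_[p]) ((b : ℤ) : ℚ_[p])) →
    HMIsot ℚ ((a : ℤ) : ℚ) ((b : ℤ) : ℚ) := by
  induction n using Nat.strong_induction_on with
  | _ n IH =>
  have key : ∀ a b : ℤ, a.natAbs + b.natAbs ≤ n → a.natAbs ≤ b.natAbs → a ≠ 0 → b ≠ 0 →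
      Squarefree a → Squarefree b →
      (∀ (p : ℕ) [Fact p.Prime], HMIsot ℚ_[p] ((a : ℤ) : ℚ_[p]) ((b : ℤ) : ℚ_[p])) →
      HMIsot ℚ ((a : ℤ) : ℚ) ((b : ℤ) : ℚ) := by
    intro a b hn hord ha0 hb0 hsa hsb hloc
    by_cases ha1 : a = 1
    · subst ha1
      exact ⟨1, 1, 0, fun ⟨h, _, _⟩ => one_ne_zero h, by push_cast; ring⟩
    by_cases hb1 : b = 1
    · subst hb1
      exact ⟨1, 0, 1, fun ⟨h, _, _⟩ => one_ne_zero h, by push_cast; ring⟩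
    by_cases hbsmall : b.natAbs ≤ 1
    · exfalso
      have hbn : b.natAbs = 1 := by
        have := Int.natAbs_eq_zero.not.2 hb0
        omega
      have hbm : b = -1 := by
        rcases Int.natAbs_eq_iff.1 hbn with h | h
        · exact absurd h hb1
        · exact_mod_cast h
      have han : a.natAbs = 1 := by
        have := Int.natAbs_eq_zero.not.2 ha0
        omega
      have ham : a = -1 := by
        rcases Int.natAbs_eq_iff.1 han with h | h
        · exact absurd h ha1
        · exact_mod_cast h
      have h2 := hloc 2
      rw [ham, hbm] at h2
      exact hm_two h2
    -- main descent, |b| ≥ 2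
    have hb2 : 2 ≤ |b| := by
      rw [Int.abs_eq_natAbs]
      exact_mod_cast (by omega : 2 ≤ b.natAbs)
    have hper : ∀ p : ℕ, p.Prime → p ∣ b.natAbs → ∃ t : ℤ, (p : ℤ) ∣ t ^ 2 - a := by
      intro p hp hpb
      haveI : Fact p.Prime := ⟨hp⟩
      refine hm_sq_mod hsb ?_ (hloc p)
      exact (Int.natCast_dvd_natCast.2 hpb).trans (Int.natAbs_dvd.2 dvd_rfl)
    obtain ⟨t0, ht0⟩ := hm_crt a b.natAbs (Int.squarefree_natAbs.2 hsb) hper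
    have hbt0 : b ∣ t0 ^ 2 - a := Int.natAbs_dvd.1 ht0
    obtain ⟨t, htb, hbt⟩ := hm_balanced a b t0 hb2 hbt0
    obtain ⟨c, hc⟩ := hbt
    by_cases hc0 : c = 0
    · exfalso
      rw [hc0, mul_zero, sub_eq_zero] at hc
      have hu : IsUnit t := hsa t ⟨1, by rw [← hc]; ring⟩
      rcases Int.isUnit_iff.1 hu with h | h <;> rw [h] at hc <;> norm_num at hc <;>
        exact ha1 hc.symm
    · have habs : |b| * |c| = |t ^ 2 - a| := by rw [← abs_mul, ← hc]
      have hta : |t ^ 2 - a| ≤ t ^ 2 + |a| := by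
        calc |t ^ 2 - a| ≤ |t ^ 2| + |a| := abs_sub _ _
          _ = t ^ 2 + |a| := by rw [abs_of_nonneg (sq_nonneg t)]
      have h4t : 4 * t ^ 2 ≤ b ^ 2 := by nlinarith [htb, abs_nonneg t, sq_abs t, sq_abs b]
      have haleb : |a| ≤ |b| := by
        rw [Int.abs_eq_natAbs, Int.abs_eq_natAbs]
        exact_mod_cast hord
      have hcb : |c| < |b| := by nlinarith [abs_nonneg c, abs_nonneg b, sq_abs b]
      obtain ⟨m, k, hsm, hk0, hmk⟩ := hm_sqfree_decomp_int c hc0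
      have hm0 : m ≠ 0 := hsm.ne_zero
      have hmc : m.natAbs ≤ c.natAbs :=
        Nat.le_of_dvd (Int.natAbs_pos.2 hc0) (Int.natAbs_dvd_natAbs.2 ⟨k ^ 2, hmk⟩)
      have hlocm : ∀ (p : ℕ) [Fact p.Prime], HMIsot ℚ_[p] ((a : ℤ) : ℚ_[p]) ((m : ℤ) : ℚ_[p]) := by
        intro p _
        have hcast : ((t : ℤ) : ℚ_[p]) ^ 2 - ((a : ℤ) : ℚ_[p]) = ((b : ℤ) : ℚ_[p]) * ((c : ℤ) : ℚ_[p]) := by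
          exact_mod_cast congrArg (fun x : ℤ => (x : ℚ_[p])) hc
        have h1 : HMIsot ℚ_[p] ((a : ℤ) : ℚ_[p]) ((c : ℤ) : ℚ_[p]) :=
          hmIsot_of_norm (Int.cast_ne_zero.2 hb0) hcast (hloc p)
        have h2 : ((c : ℤ) : ℚ_[p]) = ((m : ℤ) : ℚ_[p]) * ((k : ℤ) : ℚ_[p]) ^ 2 := by
          exact_mod_cast congrArg (fun x : ℤ => (x : ℚ_[p])) hmk
        rw [h2] at h1
        exact hmIsot_scale _ (Int.cast_ne_zero.2 hk0) h1
      have hlt : a.natAbs + m.natAbs < n := by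
        have hcbn : c.natAbs < b.natAbs := by
          rw [Int.abs_eq_natAbs, Int.abs_eq_natAbs] at hcb
          exact_mod_cast hcb
        omega
      have hrec : HMIsot ℚ ((a : ℤ) : ℚ) ((m : ℤ) : ℚ) :=
        IH _ hlt a m le_rfl ha0 hm0 hsa hsm hlocm
      have h3 : HMIsot ℚ ((a : ℤ) : ℚ) ((c : ℤ) : ℚ) := by
        have h4 := hmIsot_scale' ((k : ℤ) : ℚ) (Int.cast_ne_zero.2 hk0) hrec
        rw [show ((m : ℤ) : ℚ) * ((k : ℤ) : ℚ) ^ 2 = ((c : ℤ) : ℚ) by exact_mod_cast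
          (congrArg (fun x : ℤ => (x : ℚ)) hmk).symm] at h4
        exact h4
      refine hmIsot_of_norm (t := ((t : ℤ) : ℚ)) (Int.cast_ne_zero.2 hc0) ?_ h3
      · show ((t : ℤ) : ℚ) ^ 2 - ((a : ℤ) : ℚ) = ((c : ℤ) : ℚ) * ((b : ℤ) : ℚ)
        exact_mod_cast congrArg (fun x : ℤ => (x : ℚ)) (hc.trans (mul_comm b c))
  intro a b hn ha0 hb0 hsa hsb hloc
  rcases le_total a.natAbs b.natAbs with hord | hord
  · exact key a b hn hord ha0 hb0 hsa hsb hloc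
  · exact hmIsot_swap (key b a (by omega) hord hb0 ha0 hsb hsa
      (fun p _ => hmIsot_swap (hloc p)))

def HMGen (K : Type*) [Field K] (a b c d e f : ℚ) : Prop :=
  ∃ x y z : K, ¬ (x = 0 ∧ y = 0 ∧ z = 0) ∧
    (a : K) * x ^ 2 + (b : K) * y ^ 2 + (c : K) * z ^ 2 +
      (d : K) * x * y + (e : K) * x * z + (f : K) * y * z = 0

variable {K : Type*} [Field K] [CharZero K]

theorem hmGen_swapxy {a b c d e f : ℚ} (h : HMGen K a b c d e f) : HMGen K b a c d f e := by
  obtain ⟨x, y, z, hnz, he⟩ := h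
  exact ⟨y, x, z, fun ⟨h1, h2, h3⟩ => hnz ⟨h2, h1, h3⟩, by linear_combination he⟩

theorem hmGen_step1 {a b c d e f : ℚ} (ha : a ≠ 0) :
    HMGen K a b c d e f ↔
      HMGen K a (b - d ^ 2 / (4 * a)) (c - e ^ 2 / (4 * a)) 0 0 (f - d * e / (2 * a)) := by
  have haK : (a : K) ≠ 0 := Rat.cast_ne_zero.2 ha
  constructor
  · rintro ⟨x, y, z, hnz, he⟩
    refine ⟨x + ((d / (2 * a) : ℚ) : K) * y + ((e / (2 * a) : ℚ) : K) * z, y, z,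
      fun ⟨h1, h2, h3⟩ => hnz ⟨?_, h2, h3⟩, ?_⟩
    · rw [h2, h3] at h1; simpa using h1
    · push_cast
      field_simp
      linear_combination (16 * (a : K)) * he
  · rintro ⟨x, y, z, hnz, he⟩
    refine ⟨x - ((d / (2 * a) : ℚ) : K) * y - ((e / (2 * a) : ℚ) : K) * z, y, z,
      fun ⟨h1, h2, h3⟩ => hnz ⟨?_, h2, h3⟩, ?_⟩
    · rw [h2, h3] at h1; simpa using h1
    · push_cast at he ⊢
      field_simp at he
      field_simp
      linear_combination he / 2

theorem hmGen_step2 {a B C F : ℚ} (hB : B ≠ 0) :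
    HMGen K a B C 0 0 F ↔ HMGen K a B (C - F ^ 2 / (4 * B)) 0 0 0 := by
  constructor
  · intro h
    have h1 := (hmGen_step1 (K := K) (b := a) (c := C) (d := 0) (e := F) (f := 0) hB).mp
      (hmGen_swapxy h)
    rw [show a - 0 ^ 2 / (4 * B) = a by ring, show (0 : ℚ) - 0 * F / (2 * B) = 0 by ring] at h1
    exact hmGen_swapxy h1
  · intro h
    have h1 := hmGen_swapxy h
    have h1' : HMGen K B (a - 0 ^ 2 / (4 * B)) (C - F ^ 2 / (4 * B)) 0 0 (0 - 0 * F / (2 * B)) := by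
      rw [show a - 0 ^ 2 / (4 * B) = a by ring, show (0 : ℚ) - 0 * F / (2 * B) = 0 by ring]
      exact h1
    exact hmGen_swapxy ((hmGen_step1 (K := K) hB).mpr h1')

theorem hmGen_diag {a B C : ℚ} (ha : a ≠ 0) :
    HMGen K a B C 0 0 0 ↔ HMIsot K ((-B / a : ℚ) : K) ((-C / a : ℚ) : K) := by
  have haK : (a : K) ≠ 0 := Rat.cast_ne_zero.2 ha
  constructor
  · rintro ⟨x, y, z, hnz, he⟩
    refine ⟨x, y, z, hnz, ?_⟩
    push_cast
    field_simp
    linear_combination (1 : K) * he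
  · rintro ⟨x, y, z, hnz, he⟩
    refine ⟨x, y, z, hnz, ?_⟩
    push_cast at he
    field_simp at he
    linear_combination (1 : K) * he

/-- If a ternary rational quadratic form has a nontrivial zero in `ℚ_p` for
every prime `p`, then it has a nontrivial zero in `ℚ`. -/
theorem stmt_9 (a b c d e f : ℚ)
    (hp : ∀ (p : ℕ) [Fact p.Prime],
      ∃ x y z : ℚ_[p], ¬ (x = 0 ∧ y = 0 ∧ z = 0) ∧
        (a : ℚ_[p]) * x ^ 2 + (b : ℚ_[p]) * y ^ 2 + (c : ℚ_[p]) * z ^ 2 +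
          (d : ℚ_[p]) * x * y + (e : ℚ_[p]) * x * z + (f : ℚ_[p]) * y * z = 0) :
    ∃ x y z : ℚ, ¬ (x = 0 ∧ y = 0 ∧ z = 0) ∧
      a * x ^ 2 + b * y ^ 2 + c * z ^ 2 + d * x * y + e * x * z + f * y * z = 0 := by
  by_cases ha : a = 0
  · exact ⟨1, 0, 0, fun ⟨h, _, _⟩ => one_ne_zero h, by rw [ha]; ring⟩
  have hfin : HMGen ℚ a b c d e f →
      ∃ x y z : ℚ, ¬ (x = 0 ∧ y = 0 ∧ z = 0) ∧
        a * x ^ 2 + b * y ^ 2 + c * z ^ 2 + d * x * y + e * x * z + f * y * z = 0 := by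
    rintro ⟨x, y, z, hnz, he⟩
    exact ⟨x, y, z, hnz, by simpa using he⟩
  apply hfin
  rw [hmGen_step1 (K := ℚ) ha]
  by_cases hB0 : b - d ^ 2 / (4 * a) = 0
  · exact ⟨0, 1, 0, fun ⟨_, h2, _⟩ => one_ne_zero h2, by simp [hB0]⟩
  rw [hmGen_step2 (K := ℚ) hB0]
  by_cases hC0 : (c - e ^ 2 / (4 * a)) - (f - d * e / (2 * a)) ^ 2 / (4 * (b - d ^ 2 / (4 * a))) = 0
  · exact ⟨0, 0, 1, fun ⟨_, _, h3⟩ => one_ne_zero h3, by simp [hC0]⟩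
  rw [hmGen_diag (K := ℚ) ha]
  set q : ℚ := -(b - d ^ 2 / (4 * a)) / a with hqdef
  set r : ℚ := -((c - e ^ 2 / (4 * a)) - (f - d * e / (2 * a)) ^ 2 / (4 * (b - d ^ 2 / (4 * a)))) / a
    with hrdef
  have hq0 : q ≠ 0 := div_ne_zero (neg_ne_zero.2 hB0) ha
  have hr0 : r ≠ 0 := div_ne_zero (neg_ne_zero.2 hC0) ha
  obtain ⟨m₁, s₁, hsm₁, hs₁, hq⟩ := hm_sqfree_decomp_rat q hq0
  obtain ⟨m₂, s₂, hsm₂, hs₂, hr⟩ := hm_sqfree_decomp_rat r hr0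
  have hm₁0 : m₁ ≠ 0 := hsm₁.ne_zero
  have hm₂0 : m₂ ≠ 0 := hsm₂.ne_zero
  have hloc : ∀ (p : ℕ) [Fact p.Prime],
      HMIsot ℚ_[p] ((m₁ : ℤ) : ℚ_[p]) ((m₂ : ℤ) : ℚ_[p]) := by
    intro p _
    have h0 : HMGen ℚ_[p] a b c d e f := hp p
    have h1 := (hmGen_step1 (K := ℚ_[p]) ha).mp h0
    have h2 := (hmGen_step2 (K := ℚ_[p]) hB0).mp h1
    have h3 := (hmGen_diag (K := ℚ_[p]) ha).mp h2
    rw [← hqdef, ← hrdef] at h3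
    have hqc : ((q : ℚ) : ℚ_[p]) = ((m₁ : ℤ) : ℚ_[p]) * ((s₁ : ℚ) : ℚ_[p]) ^ 2 := by
      rw [hq]; push_cast; ring
    have hrc : ((r : ℚ) : ℚ_[p]) = ((m₂ : ℤ) : ℚ_[p]) * ((s₂ : ℚ) : ℚ_[p]) ^ 2 := by
      rw [hr]; push_cast; ring
    rw [hqc, hrc] at h3
    have h4 := hmIsot_scale _ (show ((s₂ : ℚ) : ℚ_[p]) ≠ 0 from Rat.cast_ne_zero.2 hs₂) h3
    have h5 := hmIsot_swap h4
    have h6 := hmIsot_scale _ (show ((s₁ : ℚ) : ℚ_[p]) ≠ 0 from Rat.cast_ne_zero.2 hs₁) h5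
    exact hmIsot_swap h6
  have hcore := hm_core (m₁.natAbs + m₂.natAbs) m₁ m₂ le_rfl hm₁0 hm₂0 hsm₁ hsm₂ hloc
  rw [show ((q : ℚ) : ℚ) = q from Rat.cast_id q, show ((r : ℚ) : ℚ) = r from Rat.cast_id r,
    hq, hr]
  have h4 := hmIsot_scale' s₂ hs₂ hcore
  have h5 := hmIsot_swap h4
  have h6 := hmIsot_scale' s₁ hs₁ h5
  exact hmIsot_swap h6
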